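/- Let G be a finite group, N a normal subgroup of G, and let B = bᴳ and C = cᴳ be G-conjugacy classes of elements b, c ∈ N with coprime sizes. Then the product set BC equals CB, BC is a single G-conjugacy class contained in N, and |BC| divides |B|·|C|. -/

import Mathlib

open scoped Pointwise

open Subgroup

/-- The `G`-conjugacy class of `b`, as a set. -/
def gclass {G : Type*} [Group G] (b : G) : Set G := {y | ∃ g : G, g * b * g⁻¹ = y}

section aux
variable {G : Type*} [Group G] [Finite G]

lemma gclass_eq_orbit (x : G) : gclass x = MulAction.orbit (ConjAct G) x := by
  ext y
  constructor
  · rintro ⟨g, rfl⟩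
    exact ⟨ConjAct.toConjAct g, rfl⟩
  · rintro ⟨g, rfl⟩
    exact ⟨ConjAct.ofConjAct g, rfl⟩

lemma card_gclass (x : G) : Nat.card (gclass x) = (centralizer {x}).index := by
  rw [gclass_eq_orbit, Nat.card_coe_set_eq, ← MulAction.index_stabilizer,
    Subgroup.centralizer_eq_comap_stabilizer]
  exact (index_comap_of_surjective _ (MulEquiv.surjective ConjAct.toConjAct)).symm

lemma relindex_eq_of_coprime {H K : Subgroup G} (hcop : Nat.Coprime H.index K.index) :
    K.relIndex H = K.index := by
  have h2 : (H ⊓ K).relIndex H * H.index = (H ⊓ K).index :=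
    relIndex_mul_index inf_le_left
  rw [inf_relIndex_left] at h2
  have h3 : K.index ∣ K.relIndex H * H.index := h2 ▸ index_dvd_of_le inf_le_right
  have h5 : K.index ∣ K.relIndex H := hcop.symm.dvd_of_dvd_mul_right h3
  have hne : K.relIndex H ≠ 0 := index_ne_zero_of_finite (H := K.subgroupOf H)
  have hne' : K.relIndex ⊤ ≠ 0 := by
    rw [relIndex_top_right]; exact index_ne_zero_of_finite
  have h6 : K.relIndex H ≤ K.relIndex ⊤ :=
    relIndex_le_of_le_right le_top hne'
  rw [relIndex_top_right] at h6
  exact Nat.le_antisymm h6 (Nat.le_of_dvd (Nat.pos_of_ne_zero hne) h5)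

lemma exists_mul_of_coprime {H K : Subgroup G} (hcop : Nat.Coprime H.index K.index)
    (g : G) : ∃ h ∈ H, ∃ k ∈ K, h * k = g := by
  have hrel : K.relIndex H = K.index := relindex_eq_of_coprime hcop
  let f : H ⧸ K.subgroupOf H → G ⧸ K :=
    Quotient.map' Subtype.val (fun a b hab => by
      rw [QuotientGroup.leftRel_apply] at hab ⊢
      exact hab)
  have hinj : Function.Injective f := by
    refine Quotient.ind₂' fun a b hab => ?_
    apply Quotient.sound'
    rw [QuotientGroup.leftRel_apply]
    simp only [f, Quotient.map'_mk''] at hab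
    have h2 := Quotient.exact' hab
    rwa [QuotientGroup.leftRel_apply] at h2
  have hcard : Nat.card (G ⧸ K) ≤ Nat.card (H ⧸ K.subgroupOf H) := by
    change K.index ≤ K.relIndex H
    omega
  have hsurj : Function.Surjective f := (hinj.bijective_of_nat_card_le hcard).surjective
  obtain ⟨x, hx⟩ := hsurj (QuotientGroup.mk g)
  induction x using Quotient.inductionOn' with
  | h h =>
    have hk : (h : G)⁻¹ * g ∈ K := QuotientGroup.eq.mp hx
    exact ⟨h, h.2, (h : G)⁻¹ * g, hk, by group⟩

lemma gclass_mul_of_coprime {b c : G}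
    (hcop : Nat.Coprime (Nat.card (gclass b)) (Nat.card (gclass c))) :
    gclass b * gclass c = gclass (b * c) := by
  rw [card_gclass, card_gclass] at hcop
  apply le_antisymm
  · rintro x ⟨y, ⟨g, rfl⟩, z, ⟨h, rfl⟩, rfl⟩
    obtain ⟨u, hu, v, hv, huv⟩ := exists_mul_of_coprime hcop (g⁻¹ * h)
    have hub : u * b = b * u := (mem_centralizer_iff.mp hu b rfl).symm
    have hvc : v * c = c * v := (mem_centralizer_iff.mp hv c rfl).symm
    refine ⟨g * u, ?_⟩
    have hh : g * (u * v) = h := by rw [huv]; group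
    calc (g * u) * (b * c) * (g * u)⁻¹
        = g * (u * b) * (c * v) * v⁻¹ * u⁻¹ * g⁻¹ := by group
      _ = g * (b * u) * (v * c) * v⁻¹ * u⁻¹ * g⁻¹ := by rw [hub, ← hvc]
      _ = g * b * g⁻¹ * (g * (u * v) * c * (g * (u * v))⁻¹) := by group
      _ = g * b * g⁻¹ * (h * c * h⁻¹) := by rw [hh]
  · rintro x ⟨g, rfl⟩
    exact ⟨g * b * g⁻¹, ⟨g, rfl⟩, g * c * g⁻¹, ⟨g, rfl⟩, by group⟩

lemma gclass_eq_of_conj {x y : G} (h : ∃ g : G, g * x * g⁻¹ = y) : gclass x = gclass y := by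
  obtain ⟨g, rfl⟩ := h
  ext z
  constructor
  · rintro ⟨k, rfl⟩
    exact ⟨k * g⁻¹, by group⟩
  · rintro ⟨k, rfl⟩
    exact ⟨k * g, by group⟩

end aux

theorem stmt1 {G : Type*} [Group G] [Finite G] (N : Subgroup G) (hN : N.Normal)
    (b c : G) (hb : b ∈ N) (hc : c ∈ N)
    (hcop : Nat.Coprime (Nat.card (gclass b)) (Nat.card (gclass c))) :
    gclass b * gclass c = gclass c * gclass b ∧
    (∃ a ∈ N, gclass b * gclass c = gclass a) ∧
    Nat.card (gclass b * gclass c) ∣ Nat.card (gclass b) * Nat.card (gclass c) := by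
  have hbc : gclass b * gclass c = gclass (b * c) := gclass_mul_of_coprime hcop
  have hcb : gclass c * gclass b = gclass (c * b) := gclass_mul_of_coprime hcop.symm
  have hconj : gclass (c * b) = gclass (b * c) :=
    gclass_eq_of_conj ⟨b, by group⟩
  refine ⟨by rw [hbc, hcb, hconj], ⟨b * c, N.mul_mem hb hc, hbc⟩, ?_⟩
  rw [hbc, card_gclass, card_gclass, card_gclass]
  have hle : centralizer {b} ⊓ centralizer {c} ≤ centralizer {b * c} := by
    intro u hu'
    rw [mem_inf] at hu'
    obtain ⟨hu, hv⟩ := hu'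
    rw [mem_centralizer_iff] at hu hv ⊢
    rintro g rfl
    have h1 := hu b rfl
    have h2 := hv c rfl
    calc b * c * u = b * (c * u) := by group
      _ = b * u * c := by rw [h2]; group
      _ = u * (b * c) := by rw [h1]; group
  have h1 : (centralizer {b * c}).index ∣ (centralizer {b} ⊓ centralizer {c}).index :=
    index_dvd_of_le hle
  have h2 : (centralizer {b} ⊓ centralizer {c}).relIndex (centralizer {b}) * (centralizer {b}).index
      = (centralizer {b} ⊓ centralizer {c}).index := relIndex_mul_index inf_le_left
  rw [inf_relIndex_left] at h2
  rw [card_gclass, card_gclass] at hcop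
  rw [relindex_eq_of_coprime hcop] at h2
  calc (centralizer {b * c}).index
      ∣ (centralizer {b} ⊓ centralizer {c}).index := h1
    _ = (centralizer {b}).index * (centralizer {c}).index := by rw [← h2, Nat.mul_comm]
    _ ∣ _ := dvd_rfl
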